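/- Let T be a C^{2+α} orientation-preserving circle diffeomorphism with irrational rotation number, let ξ_i = T^i ξ_0, and let Δ^{(n)}_i be the n-th fundamental arcs. Then there is a constant C such that for all n, m ≥ 0 and all 0 ≤ i ≤ j < i + q_{n+1}, one has C^{-1} ≤ (|Δ^{(n+m)}_j|·|Δ^{(n)}_i|)/(|Δ^{(n+m)}_i|·|Δ^{(n)}_j|) ≤ C. (Comparability of ratios of fundamental arc lengths along a trajectory within one fundamental period.) -/

import Mathlib

set_option maxHeartbeats 2000000 in
example : True := trivial

open Filter

namespace ArcRatioAux

lemma L_int {L : ℝ → ℝ} (hLper : ∀ x, L (x + 1) = L x + 1) (b : ℤ) (x : ℝ) :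
    L (x + b) = L x + b := by
  have hper : Function.Periodic (fun y => L y - y) 1 := by
    intro y; simp only [hLper]; ring
  have := hper.zsmul b x
  simp only [zsmul_eq_mul, mul_one] at this
  linarith [this]

lemma iter_int {L : ℝ → ℝ} (hLper : ∀ x, L (x + 1) = L x + 1) (a : ℕ) (b : ℤ) (x : ℝ) :
    L^[a] (x + b) = L^[a] x + b := by
  induction a generalizing x with
  | zero => simp
  | succ a ih =>
    rw [Function.iterate_succ_apply, Function.iterate_succ_apply, L_int hLper, ih]

lemma iter_deriv {L dL : ℝ → ℝ} (hderiv : ∀ x, HasDerivAt L (dL x) x) (a : ℕ) (x : ℝ) :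
    HasDerivAt (L^[a]) (∏ t ∈ Finset.range a, dL (L^[t] x)) x := by
  induction a with
  | zero => simpa using hasDerivAt_id x
  | succ a ih =>
    have h1 : HasDerivAt L (dL (L^[a] x)) (L^[a] x) := hderiv _
    have h2 := h1.comp x ih
    have : L ∘ (L^[a]) = L^[a+1] := by
      funext y; rw [Function.comp_apply, ← Function.iterate_succ_apply' L a y]
    rw [this] at h2
    rw [Finset.prod_range_succ]
    rw [mul_comm]
    exact h2

/-- MVT with product-of-derivatives form. -/
lemma mvt_iter {L dL : ℝ → ℝ} (hderiv : ∀ x, HasDerivAt L (dL x) x) (s : ℕ) (w z : ℝ)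
    (hne : w ≠ z) :
    ∃ c ∈ Set.uIcc w z,
      L^[s] z - L^[s] w = (∏ t ∈ Finset.range s, dL (L^[t] c)) * (z - w) := by
  have key : ∀ w z : ℝ, w < z → ∃ c ∈ Set.uIcc w z,
      L^[s] z - L^[s] w = (∏ t ∈ Finset.range s, dL (L^[t] c)) * (z - w) := by
    intro w z hwz
    obtain ⟨c, hc, hc2⟩ := exists_hasDerivAt_eq_slope (L^[s])
      (fun y => ∏ t ∈ Finset.range s, dL (L^[t] y)) hwz
      (fun y _ => (iter_deriv hderiv s y).continuousAt.continuousWithinAt)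
      (fun y _ => iter_deriv hderiv s y)
    refine ⟨c, Set.Ioo_subset_Icc_self hc |> (Set.Icc_subset_uIcc), ?_⟩
    rw [hc2]
    rw [div_mul_cancel₀]
    exact sub_ne_zero.2 hwz.ne'
  rcases hne.lt_or_gt with h | h
  · exact key w z h
  · obtain ⟨c, hc, hc2⟩ := key z w h
    exact ⟨c, Set.uIcc_comm w z ▸ hc, by linarith [hc2]⟩

/-- Sum of lengths of pairwise disjoint open intervals inside `[0,2]` is at most 2. -/
lemma sum_Ioo_le (s : ℕ) (c d : ℕ → ℝ)
    (h0 : ∀ t, t < s → 0 ≤ c t) (h2 : ∀ t, t < s → d t ≤ 2) (hcd : ∀ t, t < s → c t ≤ d t)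
    (hdisj : ∀ t, t < s → ∀ t', t' < s → t ≠ t' → d t ≤ c t' ∨ d t' ≤ c t) :
    ∑ t ∈ Finset.range s, (d t - c t) ≤ 2 := by
  have hPD : (↑(Finset.range s) : Set ℕ).PairwiseDisjoint
      (fun t => Set.Ioo (c t) (d t)) := by
    intro t ht t' ht' hne
    simp only [Finset.coe_range, Set.mem_Iio] at ht ht'
    have hdd := hdisj t ht t' ht' hne
    refine Set.disjoint_left.2 fun x hx hx' => ?_
    rcases hdd with h | h
    · exact absurd (hx.2.trans_le (h.trans hx'.1.le)) (lt_irrefl x)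
    · exact absurd (hx'.2.trans_le (h.trans hx.1.le)) (lt_irrefl x)
  have hvol := MeasureTheory.measure_biUnion_finset (μ := MeasureTheory.volume) hPD
    (fun t _ => measurableSet_Ioo (a := c t) (b := d t))
  have hsub : (⋃ t ∈ Finset.range s, Set.Ioo (c t) (d t)) ⊆ Set.Icc (0:ℝ) 2 := by
    intro x hx
    simp only [Set.mem_iUnion, Finset.mem_range] at hx
    obtain ⟨t, ht, hxt⟩ := hx
    exact ⟨(h0 t ht).trans hxt.1.le, hxt.2.le.trans (h2 t ht)⟩
  have hle : ∑ t ∈ Finset.range s, MeasureTheory.volume (Set.Ioo (c t) (d t))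
      ≤ ENNReal.ofReal 2 := by
    rw [← hvol]
    calc MeasureTheory.volume (⋃ t ∈ Finset.range s, Set.Ioo (c t) (d t))
        ≤ MeasureTheory.volume (Set.Icc (0:ℝ) 2) := MeasureTheory.measure_mono hsub
      _ = ENNReal.ofReal 2 := by rw [Real.volume_Icc]; norm_num
  have heq : ∀ t ∈ Finset.range s, MeasureTheory.volume (Set.Ioo (c t) (d t))
      = ENNReal.ofReal (d t - c t) := fun t _ => Real.volume_Ioo
  rw [Finset.sum_congr rfl heq] at hle
  rw [← ENNReal.ofReal_sum_of_nonneg (fun t ht => by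
    simp only [Finset.mem_range] at ht; linarith [hcd t ht])] at hle
  exact (ENNReal.ofReal_le_ofReal_iff (by norm_num)).1 hle

lemma log_lip {L dL ddL : ℝ → ℝ}
    (hLper : ∀ x, L (x + 1) = L x + 1)
    (hderiv : ∀ x, HasDerivAt L (dL x) x)
    (hderiv2 : ∀ x, HasDerivAt dL (ddL x) x)
    (hdpos : ∀ x, 0 < dL x)
    (α H : ℝ) (hα0 : 0 < α) (hH : 0 ≤ H)
    (hHolder : ∀ x y : ℝ, |ddL x - ddL y| ≤ H * |x - y| ^ α) :
    ∃ V, 0 ≤ V ∧ ∀ u v, |Real.log (dL u) - Real.log (dL v)| ≤ V * |u - v| := by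
  have hdper : ∀ x, dL (x + 1) = dL x := by
    intro x
    have h1 : HasDerivAt (fun y => L (y + 1)) (dL (x + 1)) x := by
      simpa [Function.comp_def] using (hderiv (x + 1)).comp x ((hasDerivAt_id x).add_const (1:ℝ))
    have h2 : HasDerivAt (fun y => L (y + 1)) (dL x) x := by
      have : (fun y => L (y + 1)) = fun y => L y + 1 := funext hLper
      rw [this]
      exact (hderiv x).add_const 1
    exact h1.unique h2
  have hdperZ : Function.Periodic dL 1 := hdper
  have hddper : ∀ x, ddL (x + 1) = ddL x := by
    intro x
    have h1 : HasDerivAt (fun y => dL (y + 1)) (ddL (x + 1)) x := by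
      simpa [Function.comp_def] using (hderiv2 (x + 1)).comp x ((hasDerivAt_id x).add_const (1:ℝ))
    have h2 : HasDerivAt (fun y => dL (y + 1)) (ddL x) x := by
      have : (fun y => dL (y + 1)) = dL := funext hdper
      rw [this]; exact hderiv2 x
    exact h1.unique h2
  have hddperZ : Function.Periodic ddL 1 := hddper
  have hfr : ∀ (f : ℝ → ℝ), Function.Periodic f 1 → ∀ x, f (Int.fract x) = f x := by
    intro f hf x
    have := hf.sub_zsmul_eq (x := x) ⌊x⌋
    simpa [zsmul_eq_mul, Int.self_sub_floor] using this
  have hdcont : Continuous dL := by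
    rw [continuous_iff_continuousAt]; exact fun x => (hderiv2 x).continuousAt
  obtain ⟨xm, hxm, hmin⟩ := isCompact_Icc.exists_isMinOn (Set.nonempty_Icc.2 zero_le_one)
    (hdcont.continuousOn (s := Set.Icc (0:ℝ) 1))
  set ε := dL xm with hε
  have hε0 : 0 < ε := hdpos xm
  have hdlow : ∀ x, ε ≤ dL x := by
    intro x
    have h1 : dL (Int.fract x) = dL x := hfr dL hdperZ x
    have h2 : Int.fract x ∈ Set.Icc (0:ℝ) 1 :=
      ⟨Int.fract_nonneg x, (Int.fract_lt_one x).le⟩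
    have h3 := hmin h2
    simp only [Set.mem_setOf_eq] at h3
    rw [h1] at h3
    exact h3
  set M := |ddL 0| + H with hM
  have hMbd : ∀ x, |ddL x| ≤ M := by
    intro x
    have h1 : ddL (Int.fract x) = ddL x := hfr ddL hddperZ x
    rw [← h1]
    have h2 := hHolder (Int.fract x) 0
    have h3 : |Int.fract x - 0| ^ α ≤ 1 := by
      apply Real.rpow_le_one (abs_nonneg _) _ hα0.le
      rw [sub_zero, abs_of_nonneg (Int.fract_nonneg x)]
      exact (Int.fract_lt_one x).le
    calc |ddL (Int.fract x)| ≤ |ddL 0| + |ddL (Int.fract x) - ddL 0| := by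
          have := abs_add_le (ddL 0) (ddL (Int.fract x) - ddL 0); simpa using this
      _ ≤ |ddL 0| + H * 1 := by
          have : H * |Int.fract x - 0| ^ α ≤ H * 1 := by
            apply mul_le_mul_of_nonneg_left h3 hH
          linarith [h2]
      _ = M := by rw [hM]; ring
  refine ⟨M / ε, div_nonneg (le_trans (abs_nonneg _) (hMbd 0)) hε0.le, ?_⟩
  intro u v
  have hlip := Convex.norm_image_sub_le_of_norm_hasDerivWithin_le
    (f := fun x => Real.log (dL x)) (f' := fun x => ddL x / dL x) (C := M / ε)
    (s := Set.univ) (fun x _ => ((hderiv2 x).log (hdpos x).ne').hasDerivWithinAt)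
    (fun x _ => ?_) convex_univ (Set.mem_univ v) (Set.mem_univ u)
  · simpa [Real.norm_eq_abs] using hlip
  · rw [Real.norm_eq_abs, abs_div, abs_of_pos (hdpos x)]
    apply div_le_div₀ (le_trans (abs_nonneg _) (hMbd 0)) (hMbd x) hε0 (hdlow x)

lemma sign_lemma {L : ℝ → ℝ} (hLmono : StrictMono L) (hLper : ∀ x, L (x + 1) = L x + 1)
    {ρ : ℝ} (hrot : Tendsto (fun i : ℕ => (L^[i] 0 - 0) / i) atTop (nhds ρ)) :
    (∀ (a : ℕ) (b : ℤ) (x : ℝ), (b : ℝ) < a * ρ → x + b < L^[a] x) ∧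
    (∀ (a : ℕ) (b : ℤ) (x : ℝ), (a : ℝ) * ρ < b → L^[a] x < x + b) := by
  set F : CircleDeg1Lift := ⟨⟨L, hLmono.monotone⟩, hLper⟩ with hF
  have hcoe : ⇑F = L := rfl
  have hτ : F.translationNumber = ρ := by
    apply F.translationNumber_eq_of_tendsto₀
    have : (fun i : ℕ => (F^[i]) 0 / (i:ℝ)) = fun i : ℕ => (L^[i] 0 - 0) / i := by
      funext i; rw [hcoe, sub_zero]
    rw [this]; exact hrot
  have hpow : ∀ a : ℕ, (F ^ a).translationNumber = a * ρ := fun a => by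
    rw [CircleDeg1Lift.translationNumber_pow, hτ]
  have hpowcoe : ∀ a : ℕ, ⇑(F ^ a) = L^[a] := fun a => by
    rw [CircleDeg1Lift.coe_pow, hcoe]
  constructor
  · intro a b x h
    have h2 : (b : ℝ) < (F ^ a).translationNumber := by rw [hpow]; exact_mod_cast h
    have := CircleDeg1Lift.lt_map_of_int_lt_translationNumber (f := F ^ a) h2 x
    rwa [hpowcoe] at this
  · intro a b x h
    have h2 : (F ^ a).translationNumber < (b : ℝ) := by rw [hpow]; exact_mod_cast h
    have := CircleDeg1Lift.map_lt_of_translationNumber_lt_int (f := F ^ a) h2 x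
    rwa [hpowcoe] at this

end ArcRatioAux

set_option maxHeartbeats 4000000 in
/-- Comparability of ratios of fundamental arc lengths along a trajectory within one
fundamental period, for a `C^{2+α}` circle diffeomorphism with irrational rotation
number.  Here `|Δ^{(n)}_i| = |L^{q_n + i} x₀ - L^i x₀ - p n|`. -/
theorem arc_ratio_comparable
    (L dL ddL : ℝ → ℝ) (hLmono : StrictMono L)
    (hLper : ∀ x, L (x + 1) = L x + 1)
    (hderiv : ∀ x, HasDerivAt L (dL x) x)
    (hderiv2 : ∀ x, HasDerivAt dL (ddL x) x)
    (hdpos : ∀ x, 0 < dL x)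
    (α H : ℝ) (hα : α ∈ Set.Ioc (0:ℝ) 1) (hH : 0 ≤ H)
    (hHolder : ∀ x y : ℝ, |ddL x - ddL y| ≤ H * |x - y| ^ α)
    (ρ : ℝ) (hirr : Irrational ρ) (hρ : ρ ∈ Set.Ioo (0:ℝ) 1)
    (hrot : Tendsto (fun i : ℕ => (L^[i] 0 - 0) / i) atTop (nhds ρ))
    (k q : ℕ → ℕ) (p : ℕ → ℤ)
    (hk : ∀ n, 1 ≤ k n)
    (hq0 : q 0 = 1) (hq1 : q 1 = k 1)
    (hqrec : ∀ n, q (n + 2) = k (n + 2) * q (n + 1) + q n)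
    (hp0 : p 0 = 0) (hp1 : p 1 = 1)
    (hprec : ∀ n, p (n + 2) = (k (n + 2) : ℤ) * p (n + 1) + p n)
    (hsign : ∀ n, 0 < (-1 : ℝ) ^ n * ((q n : ℝ) * ρ - (p n : ℝ)))
    (x0 : ℝ) (len : ℕ → ℕ → ℝ)
    (hlen : ∀ n i, len n i = |L^[q n + i] x0 - L^[i] x0 - (p n : ℝ)|) :
    ∃ C > 0, ∀ n m i j : ℕ, i ≤ j → j < i + q (n + 1) →
      C⁻¹ ≤ (len (n + m) j * len n i) / (len (n + m) i * len n j) ∧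
        (len (n + m) j * len n i) / (len (n + m) i * len n j) ≤ C := by
  classical
  obtain ⟨hα0, hα1⟩ := hα
  obtain ⟨hρ0, hρ1⟩ := hρ
  obtain ⟨hsl, hsg⟩ := ArcRatioAux.sign_lemma hLmono hLper hrot
  -- order-preserving orbit map
  set Φ : ℕ → ℤ → ℝ := fun a b => L^[a] x0 - b with hΦdef
  have Φlt : ∀ (a : ℕ) (b : ℤ) (a' : ℕ) (b' : ℤ), (a:ℝ) * ρ - b < (a':ℝ) * ρ - b' →
      Φ a b < Φ a' b' := by
    intro a b a' b' h
    simp only [hΦdef]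
    rcases le_or_gt a a' with hle | hlt
    · have hsub : L^[a'] x0 = L^[a' - a] (L^[a] x0) := by
        rw [← Function.iterate_add_apply]; congr 1; omega
      have hc : ((a' - a : ℕ) : ℝ) = (a' : ℝ) - a := by
        push_cast [Nat.cast_sub hle]; ring
      have hb : ((b' - b : ℤ) : ℝ) < ((a' - a : ℕ) : ℝ) * ρ := by
        rw [hc]; push_cast; nlinarith [h]
      have := hsl (a' - a) (b' - b) (L^[a] x0) hb
      rw [← hsub] at this
      push_cast at this ⊢
      linarith
    · have hsub : L^[a] x0 = L^[a - a'] (L^[a'] x0) := by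
        rw [← Function.iterate_add_apply]; congr 1; omega
      have hc : ((a - a' : ℕ) : ℝ) = (a : ℝ) - a' := by
        push_cast [Nat.cast_sub hlt.le]; ring
      have hb : ((a - a' : ℕ) : ℝ) * ρ < ((b - b' : ℤ) : ℝ) := by
        rw [hc]; push_cast; nlinarith [h]
      have := hsg (a - a') (b - b') (L^[a'] x0) hb
      rw [← hsub] at this
      push_cast at this ⊢
      linarith
  have Φle : ∀ (a : ℕ) (b : ℤ) (a' : ℕ) (b' : ℤ), (a:ℝ) * ρ - b ≤ (a':ℝ) * ρ - b' →
      Φ a b ≤ Φ a' b' := by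
    intro a b a' b' h
    rcases eq_or_lt_of_le h with heq | hlt
    · by_cases haa : a = a'
      · subst haa
        have h1 : (b:ℝ) = b' := by linarith
        have h2 : b = b' := by exact_mod_cast h1
        subst h2; exact le_refl _
      · exfalso
        have hane : (a:ℝ) - (a':ℝ) ≠ 0 := by
          have : (a:ℝ) ≠ (a':ℝ) := by
            simp only [ne_eq, Nat.cast_inj]; exact haa
          exact sub_ne_zero.2 this
        have hrq : ρ = (((b - b' : ℤ) : ℝ)) / (((a : ℤ) - (a' : ℤ) : ℤ) : ℝ) := by
          push_cast
          field_simp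
          push_cast at hane
          nlinarith [heq, hane]
        apply hirr
        refine ⟨((b - b' : ℤ) : ℚ) / (((a : ℤ) - (a' : ℤ) : ℤ) : ℚ), ?_⟩
        rw [hrq]
        push_cast
        ring
    · exact (Φlt a b a' b' hlt).le
  -- arithmetic of convergents
  set β : ℕ → ℝ := fun n => (-1 : ℝ) ^ n * ((q n : ℝ) * ρ - (p n : ℝ)) with hβdef
  have hβpos : ∀ n, 0 < β n := hsign
  have hq_pos : ∀ n, 1 ≤ q n := by
    intro n
    induction n using Nat.strong_induction_on with
    | _ n ih =>
      match n with
      | 0 => rw [hq0]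
      | 1 => rw [hq1]; exact hk 1
      | (n+2) =>
        rw [hqrec]
        have h1 := ih n (by omega)
        calc 1 ≤ q n := h1
          _ ≤ k (n+2) * q (n+1) + q n := Nat.le_add_left _ _
  have hq_step : ∀ n, q n ≤ q (n + 1) := by
    intro n
    match n with
    | 0 => rw [hq0, hq1]; exact hk 1
    | (n+1) =>
      rw [hqrec]
      calc q (n+1) = 1 * q (n+1) := (one_mul _).symm
        _ ≤ k (n+2) * q (n+1) := Nat.mul_le_mul_right _ (hk (n+2))
        _ ≤ k (n+2) * q (n+1) + q n := Nat.le_add_right _ _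
  have hβrec : ∀ n, β (n + 2) = β n - (k (n + 2) : ℝ) * β (n + 1) := by
    intro n
    simp only [hβdef]
    rw [hqrec, hprec]
    push_cast
    ring
  have hβstep : ∀ n, β (n + 1) ≤ β n := by
    intro n
    have h2 := hβpos (n + 2)
    rw [hβrec n] at h2
    have hk1 : (1 : ℝ) ≤ (k (n+2) : ℝ) := by exact_mod_cast hk (n+2)
    nlinarith [hβpos (n+1)]
  have hβanti : Antitone β := antitone_nat_of_succ_le hβstep
  have hβ0 : β 0 = ρ := by simp [hβdef, hq0, hp0]
  have hβlt1 : ∀ n, β n < 1 := fun n => lt_of_le_of_lt (hβanti (Nat.zero_le n)) (hβ0 ▸ hρ1)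
  have hdet : ∀ n, p (n + 1) * (q n : ℤ) - p n * (q (n + 1) : ℤ) = (-1) ^ n := by
    intro n
    induction n with
    | zero => rw [hp1, hp0, hq0]; ring
    | succ n ih =>
      have hq2 : (q (n + 2) : ℤ) = (k (n + 2) : ℤ) * (q (n + 1) : ℤ) + (q n : ℤ) := by
        exact_mod_cast congrArg (Nat.cast : ℕ → ℤ) (hqrec n)
      rw [hprec n, hq2]
      linear_combination (-1 : ℤ) * ih
  have hθ : ∀ N, (q N : ℝ) * ρ - p N = (-1 : ℝ) ^ N * β N := by
    intro N
    simp only [hβdef]; rw [← mul_assoc, ← pow_add, ← two_mul, pow_mul]; norm_num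
  have hθabs : ∀ N, |(q N : ℝ) * ρ - p N| = β N := by
    intro N
    rw [hθ N, abs_mul, abs_pow, abs_neg, abs_one, one_pow, one_mul, abs_of_pos (hβpos N)]
  have hθub : ∀ N, (q N : ℝ) * ρ - p N ≤ β N := fun N => (le_abs_self _).trans (hθabs N).le
  have hθlb : ∀ N, -(β N) ≤ (q N : ℝ) * ρ - p N := fun N => (hθabs N) ▸ neg_abs_le _
  -- best approximation property
  have hbest : ∀ (N s : ℕ) (r : ℤ), 1 ≤ s → s < q (N + 1) → β N ≤ |(s : ℝ) * ρ - r| := by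
    intro N s r hs1 hs2
    have he : ((-1 : ℤ) ^ N) * ((-1 : ℤ) ^ N) = 1 := by
      rw [← pow_add, ← two_mul, pow_mul]; norm_num
    obtain ⟨lam, hlam⟩ : ∃ l : ℤ, l = (-1) ^ N * (s * p (N + 1) - r * q (N + 1)) := ⟨_, rfl⟩
    obtain ⟨mu, hmu⟩ : ∃ l : ℤ, l = (-1) ^ N * (r * q N - s * p N) := ⟨_, rfl⟩
    have hid1 : lam * q N + mu * q (N + 1) = s := by
      rw [hlam, hmu]
      linear_combination ((-1:ℤ)^N * s) * hdet N + (s : ℤ) * he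
    have hid2 : lam * p N + mu * p (N + 1) = r := by
      rw [hlam, hmu]
      linear_combination ((-1:ℤ)^N * r) * hdet N + (r : ℤ) * he
    have c1 : (lam : ℝ) * (q N : ℝ) + (mu : ℝ) * (q (N+1) : ℝ) = (s : ℝ) := by
      exact_mod_cast congrArg (Int.cast : ℤ → ℝ) hid1
    have c2 : (lam : ℝ) * (p N : ℝ) + (mu : ℝ) * (p (N+1) : ℝ) = (r : ℝ) := by
      exact_mod_cast congrArg (Int.cast : ℤ → ℝ) hid2
    have hreal : (s : ℝ) * ρ - r =
        (lam : ℝ) * ((q N : ℝ) * ρ - p N) + (mu : ℝ) * ((q (N+1) : ℝ) * ρ - p (N+1)) := by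
      linear_combination c2 - ρ * c1
    have he2 : ((-1 : ℝ) ^ N) * ((-1 : ℝ) ^ N) = 1 := by
      rw [← pow_add, ← two_mul, pow_mul]; norm_num
    have hθN : (q N : ℝ) * ρ - p N = (-1 : ℝ) ^ N * β N := hθ N
    have hθN1 : (q (N+1) : ℝ) * ρ - p (N+1) = -((-1 : ℝ) ^ N * β (N+1)) := by
      simp only [hβdef]
      rw [pow_succ]
      linear_combination (-((q (N+1) : ℝ) * ρ - (p (N+1) : ℝ))) * he2
    have habs : |(s : ℝ) * ρ - r| = |(lam : ℝ) * β N - (mu : ℝ) * β (N+1)| := by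
      rw [hreal, hθN, hθN1]
      have : (lam : ℝ) * ((-1:ℝ)^N * β N) + (mu:ℝ) * -((-1:ℝ)^N * β (N+1))
          = (-1:ℝ)^N * ((lam:ℝ) * β N - (mu:ℝ) * β (N+1)) := by ring
      rw [this, abs_mul, abs_pow, abs_neg, abs_one, one_pow, one_mul]
    rw [habs]
    have hβN := hβpos N
    have hβN1 := hβpos (N+1)
    have hqN : (1 : ℤ) ≤ (q N : ℤ) := by exact_mod_cast hq_pos N
    have hqN1 : (1 : ℤ) ≤ (q (N+1) : ℤ) := by exact_mod_cast hq_pos (N+1)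
    have hsint : (1 : ℤ) ≤ (s : ℤ) := by exact_mod_cast hs1
    have hsq : (s : ℤ) < (q (N+1) : ℤ) := by exact_mod_cast hs2
    have hl' : ∀ (z : ℤ), z < 0 → (z : ℝ) ≤ -1 := by
      intro z hz
      have : z ≤ -1 := by omega
      exact_mod_cast this
    have hg' : ∀ (z : ℤ), 0 < z → (1 : ℝ) ≤ (z : ℝ) := by
      intro z hz
      have : 1 ≤ z := hz
      exact_mod_cast this
    rcases lt_trichotomy lam 0 with hl | hl | hl <;>
      rcases lt_trichotomy mu 0 with hm | hm | hm
    · exfalso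
      have h1 : lam * q N ≤ -q N := by nlinarith
      have h2 : mu * q (N+1) ≤ -q (N+1) := by nlinarith
      omega
    · have hl1 : (lam : ℝ) ≤ -1 := hl' lam hl
      have hm0 : (mu : ℝ) = 0 := by exact_mod_cast hm
      have hx : (lam : ℝ) * β N - (mu : ℝ) * β (N+1) ≤ -(β N) := by nlinarith
      calc β N ≤ -((lam : ℝ) * β N - (mu : ℝ) * β (N+1)) := by linarith
        _ ≤ |(lam : ℝ) * β N - (mu : ℝ) * β (N+1)| := neg_le_abs _
    · have hl1 : (lam : ℝ) ≤ -1 := hl' lam hl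
      have hm1 : (1 : ℝ) ≤ (mu : ℝ) := hg' mu hm
      have hx : (lam : ℝ) * β N - (mu : ℝ) * β (N+1) ≤ -(β N) := by nlinarith
      calc β N ≤ -((lam : ℝ) * β N - (mu : ℝ) * β (N+1)) := by linarith
        _ ≤ |(lam : ℝ) * β N - (mu : ℝ) * β (N+1)| := neg_le_abs _
    · exfalso
      have h2 : mu * q (N+1) ≤ -q (N+1) := by nlinarith
      rw [hl] at hid1
      omega
    · exfalso; rw [hl, hm] at hid1; simp at hid1; omega
    · exfalso
      have h2 : q (N+1) ≤ mu * q (N+1) := by nlinarith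
      rw [hl] at hid1
      omega
    · have hl1 : (1 : ℝ) ≤ (lam : ℝ) := hg' lam hl
      have hm1 : (mu : ℝ) ≤ -1 := hl' mu hm
      have hx : β N ≤ (lam : ℝ) * β N - (mu : ℝ) * β (N+1) := by nlinarith
      exact hx.trans (le_abs_self _)
    · have hl1 : (1 : ℝ) ≤ (lam : ℝ) := hg' lam hl
      have hm0 : (mu : ℝ) = 0 := by exact_mod_cast hm
      have hx : β N ≤ (lam : ℝ) * β N - (mu : ℝ) * β (N+1) := by nlinarith
      exact hx.trans (le_abs_self _)
    · exfalso
      have h1 : q N ≤ lam * q N := by nlinarith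
      have h2 : q (N+1) ≤ mu * q (N+1) := by nlinarith
      omega
  -- shifting by integers
  have hΦshift : ∀ (a : ℕ) (b r : ℤ), Φ a b - (r : ℝ) = Φ a (b + r) := by
    intro a b r; simp only [hΦdef]; push_cast; ring
  have hlen2 : ∀ N kk, len N kk = |Φ (q N + kk) (p N) - Φ kk 0| := by
    intro N kk
    rw [hlen]
    simp only [hΦdef]
    rw [Int.cast_zero, sub_zero]
    congr 1
    ring
  have hlen1 : ∀ N kk, len N kk ≤ 1 := by
    intro N kk
    rw [hlen2, abs_sub_le_iff]
    constructor
    · have h2 : Φ kk 0 + 1 = Φ kk (-1) := by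
        have := hΦshift kk 0 (-1); push_cast at this; linarith
      have h1 : Φ (q N + kk) (p N) ≤ Φ kk (-1) := by
        apply Φle; push_cast
        linarith [hθub N, hβlt1 N]
      linarith
    · have h2 : Φ (q N + kk) (p N) + 1 = Φ (q N + kk) (p N + -1) := by
        have := hΦshift (q N + kk) (p N) (-1); push_cast at this; linarith
      have h1 : Φ kk 0 ≤ Φ (q N + kk) (p N + -1) := by
        apply Φle; push_cast
        linarith [hθlb N, hβlt1 N]
      linarith
  have hlenpos : ∀ N kk, 0 < len N kk := by
    intro N kk
    rw [hlen2]
    have hne : Φ (q N + kk) (p N) ≠ Φ kk 0 := by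
      rcases Nat.even_or_odd N with hpar | hpar
      · have hsgn : ((-1 : ℝ)) ^ N = 1 := hpar.neg_one_pow
        apply ne_of_gt; apply Φlt; push_cast
        have hh := hθ N; rw [hsgn, one_mul] at hh
        linarith [hβpos N]
      · have hsgn : ((-1 : ℝ)) ^ N = -1 := hpar.neg_one_pow
        apply ne_of_lt; apply Φlt; push_cast
        have hh := hθ N; rw [hsgn] at hh
        linarith [hβpos N]
    rw [abs_pos]; exact sub_ne_zero.2 hne
  -- the key disjointness-based sum bound
  have hsum : ∀ (N ii ss : ℕ), ss ≤ q (N + 1) →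
      ∑ t ∈ Finset.range ss, len N (ii + t) ≤ 2 := by
    intro N ii ss hss
    set e1 : ℕ → ℝ := fun t => Φ (ii + t) 0 with he1
    set e2 : ℕ → ℝ := fun t => Φ (q N + (ii + t)) (p N) with he2
    set cm : ℕ → ℝ := fun t => min (e1 t) (e2 t) with hcm
    set dm : ℕ → ℝ := fun t => max (e1 t) (e2 t) with hdm
    set rr : ℕ → ℤ := fun t => ⌊cm t⌋ with hrr
    have hlen3 : ∀ t, len N (ii + t) = dm t - cm t := by
      intro t
      rw [hlen2 N (ii + t)]
      simp only [hdm, hcm]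
      rw [max_sub_min_eq_abs, abs_sub_comm]
    have hcm' : ∀ (tt : ℕ) (r : ℤ), cm tt - (r : ℝ)
        = min (Φ (ii + tt) r) (Φ (q N + (ii + tt)) (p N + r)) := by
      intro tt r
      simp only [hcm, he1, he2]
      rw [← min_sub_sub_right, hΦshift, hΦshift, zero_add]
    have hdm' : ∀ (tt : ℕ) (r : ℤ), dm tt - (r : ℝ)
        = max (Φ (ii + tt) r) (Φ (q N + (ii + tt)) (p N + r)) := by
      intro tt r
      simp only [hdm, he1, he2]
      rw [← max_sub_sub_right, hΦshift, hΦshift, zero_add]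
    have core : ∀ t t' : ℕ, t < t' → t' < ss → ∀ r : ℤ,
        dm t ≤ cm t' - (r : ℝ) ∨ dm t' - (r : ℝ) ≤ cm t := by
      intro t t' htt' ht' r
      have hb := hbest N (t' - t) r (by omega) (by omega)
      have hcast : ((t' - t : ℕ) : ℝ) = (t' : ℝ) - t := by
        rw [Nat.cast_sub htt'.le]
      rw [hcast] at hb
      rcases le_or_gt 0 (((t' : ℝ) - t) * ρ - r) with hg | hg
      · left
        rw [abs_of_nonneg hg] at hb
        rw [hcm']
        simp only [hdm, he1, he2]
        apply max_le <;> apply le_min <;> apply Φle <;> push_cast <;>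
          nlinarith [hθub N, hθlb N, hβpos N, hb]
      · right
        rw [abs_of_neg hg] at hb
        rw [hdm']
        simp only [hcm, he1, he2]
        apply max_le <;> apply le_min <;> apply Φle <;> push_cast <;>
          nlinarith [hθub N, hθlb N, hβpos N, hb]
    have key := ArcRatioAux.sum_Ioo_le ss (fun t => cm t - rr t) (fun t => dm t - rr t)
      (fun t _ => by
        have := Int.floor_le (cm t)
        simp only [hrr]
        linarith)
      (fun t ht => by
        have h1 : cm t - (rr t : ℝ) < 1 := by
          simp only [hrr]
          have h2 : cm t - (⌊cm t⌋ : ℝ) = Int.fract (cm t) := (Int.self_sub_floor _)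
          rw [h2]; exact Int.fract_lt_one _
        have h3 : dm t - cm t ≤ 1 := by rw [← hlen3]; exact hlen1 N (ii + t)
        linarith)
      (fun t _ => by
        have := min_le_max (a := e1 t) (b := e2 t)
        simp only [hcm, hdm]
        linarith [this])
      (fun t ht t' ht' hne => by
        rcases hne.lt_or_gt with h | h
        · rcases core t t' h ht' (rr t' - rr t) with hd | hd
          · left; push_cast at hd; linarith
          · right; push_cast at hd; linarith
        · rcases core t' t h ht (rr t - rr t') with hd | hd
          · right; push_cast at hd; linarith
          · left; push_cast at hd; linarith)
    calc ∑ t ∈ Finset.range ss, len N (ii + t)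
        = ∑ t ∈ Finset.range ss, ((dm t - rr t) - (cm t - rr t)) := by
          apply Finset.sum_congr rfl
          intro t _
          rw [hlen3]; ring
      _ ≤ 2 := key
  -- Lipschitz constant for log ∘ dL
  obtain ⟨V, hV0, hVlip⟩ := ArcRatioAux.log_lip hLper hderiv hderiv2 hdpos α H hα0 hH hHolder
  have hiter_mono : ∀ t : ℕ, StrictMono (L^[t]) := fun t => hLmono.iterate t
  -- distance within an unordered interval
  have huIccdist : ∀ x y a b : ℝ, x ∈ Set.uIcc a b → y ∈ Set.uIcc a b → |x - y| ≤ |b - a| := by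
    intro x y a b hx hy
    have hx' := Set.mem_uIcc.1 hx
    have hy' := Set.mem_uIcc.1 hy
    have habs : |b - a| = max a b - min a b := by rw [max_sub_min_eq_abs, abs_sub_comm]
    rw [abs_sub_le_iff, habs]
    constructor <;>
      rcases hx' with ⟨u1, u2⟩ | ⟨u1, u2⟩ <;> rcases hy' with ⟨w1, w2⟩ | ⟨w1, w2⟩ <;>
      · have l1 := min_le_left a b
        have l2 := min_le_right a b
        have l3 := le_max_left a b
        have l4 := le_max_right a b
        linarith
  -- MAIN ARGUMENT
  refine ⟨Real.exp (4 * V), Real.exp_pos _, ?_⟩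
  intro n m i j hij hj
  set s := j - i with hsdef
  have hjeq : j = i + s := by omega
  have hslt : s < q (n + 1) := by omega
  set A : ℕ → ℝ := fun N => Φ (i + q N) (p N) with hA
  have hlenA : ∀ N, len N i = |A N - Φ i 0| := by
    intro N
    have h1 := hlen2 N i
    rw [show q N + i = i + q N from add_comm _ _] at h1
    exact h1
  have hAne : ∀ N, Φ i 0 ≠ A N := by
    intro N hcontra
    have h1 := hlenpos N i
    rw [hlenA N, ← hcontra, sub_self, abs_zero] at h1
    exact lt_irrefl 0 h1
  -- iterate images of points
  have hLsA : ∀ (t : ℕ) (N : ℕ), L^[t] (A N) = Φ (t + (i + q N)) (p N) := by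
    intro t N
    simp only [hA, hΦdef]
    have h1 : L^[i + q N] x0 - (p N : ℝ) = L^[i + q N] x0 + ((-(p N) : ℤ) : ℝ) := by
      push_cast; ring
    rw [h1, ArcRatioAux.iter_int hLper, ← Function.iterate_add_apply]
    push_cast; ring
  have hLsy : ∀ t : ℕ, L^[t] (Φ i 0) = Φ (t + i) 0 := by
    intro t
    simp only [hΦdef]
    rw [Int.cast_zero, sub_zero, sub_zero, ← Function.iterate_add_apply]
  have hlenj : ∀ N, len N j = |L^[s] (A N) - L^[s] (Φ i 0)| := by
    intro N
    rw [hlen2 N j, hLsA, hLsy]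
    rw [show s + (i + q N) = q N + j by omega, show s + i = j by omega]
  -- lengths at intermediate times
  have hlent : ∀ (t : ℕ) (N : ℕ), |L^[t] (A N) - L^[t] (Φ i 0)| = len N (i + t) := by
    intro t N
    rw [hLsA, hLsy, hlen2 N (i + t)]
    rw [show t + (i + q N) = q N + (i + t) by omega, show t + i = i + t by omega]
  -- MVT for both levels
  obtain ⟨c1, hc1, heq1⟩ := ArcRatioAux.mvt_iter hderiv s (Φ i 0) (A (n + m)) (hAne (n + m))
  obtain ⟨c2, hc2, heq2⟩ := ArcRatioAux.mvt_iter hderiv s (Φ i 0) (A n) (hAne n)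
  set P1 := ∏ t ∈ Finset.range s, dL (L^[t] c1) with hP1def
  set P2 := ∏ t ∈ Finset.range s, dL (L^[t] c2) with hP2def
  have hP1 : 0 < P1 := Finset.prod_pos (fun t _ => hdpos _)
  have hP2 : 0 < P2 := Finset.prod_pos (fun t _ => hdpos _)
  have hlj1 : len (n + m) j = P1 * len (n + m) i := by
    rw [hlenj (n + m), heq1, abs_mul, abs_of_pos hP1, ← hlenA (n + m)]
  have hlj2 : len n j = P2 * len n i := by
    rw [hlenj n, heq2, abs_mul, abs_of_pos hP2, ← hlenA n]
  have hratio : (len (n + m) j * len n i) / (len (n + m) i * len n j) = P1 / P2 := by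
    rw [hlj1, hlj2]
    have h1 := (hlenpos (n + m) i).ne'
    have h2 := (hlenpos n i).ne'
    field_simp
  -- membership of the MVT points in the common interval K
  have hmemi : Φ i 0 ∈ Set.uIcc (A (n + 1)) (A n) := by
    rcases Nat.even_or_odd n with hpar | hpar
    · have hs1 : ((-1 : ℝ)) ^ n = 1 := hpar.neg_one_pow
      have hs2 : ((-1 : ℝ)) ^ (n + 1) = -1 := (Even.add_one hpar).neg_one_pow
      have hv1 := hθ n; rw [hs1, one_mul] at hv1
      have hv2 := hθ (n + 1); rw [hs2] at hv2
      apply Set.mem_uIcc.2; left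
      constructor <;> apply Φle <;> push_cast <;>
        nlinarith [hβpos n, hβpos (n + 1)]
    · have hs1 : ((-1 : ℝ)) ^ n = -1 := hpar.neg_one_pow
      have hs2 : ((-1 : ℝ)) ^ (n + 1) = 1 := (Odd.add_one hpar).neg_one_pow
      have hv1 := hθ n; rw [hs1] at hv1
      have hv2 := hθ (n + 1); rw [hs2, one_mul] at hv2
      apply Set.mem_uIcc.2; right
      constructor <;> apply Φle <;> push_cast <;>
        nlinarith [hβpos n, hβpos (n + 1)]
  have hmemA : A (n + m) ∈ Set.uIcc (A (n + 1)) (A n) := by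
    rcases Nat.eq_zero_or_pos m with hm | hm
    · subst hm; exact Set.right_mem_uIcc
    have hub : (q (n + m) : ℝ) * ρ - p (n + m) ≤ β (n + 1) := by
      calc (q (n + m) : ℝ) * ρ - p (n + m) ≤ β (n + m) := hθub (n + m)
        _ ≤ β (n + 1) := hβanti (by omega)
    have hlb : -(β (n + 1)) ≤ (q (n + m) : ℝ) * ρ - p (n + m) := by
      calc -(β (n + 1)) ≤ -(β (n + m)) := by
            have := hβanti (show n + 1 ≤ n + m by omega); linarith
        _ ≤ (q (n + m) : ℝ) * ρ - p (n + m) := hθlb (n + m)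
    have hstep := hβstep n
    rcases Nat.even_or_odd n with hpar | hpar
    · have hs1 : ((-1 : ℝ)) ^ n = 1 := hpar.neg_one_pow
      have hs2 : ((-1 : ℝ)) ^ (n + 1) = -1 := (Even.add_one hpar).neg_one_pow
      have hv1 := hθ n; rw [hs1, one_mul] at hv1
      have hv2 := hθ (n + 1); rw [hs2] at hv2
      apply Set.mem_uIcc.2; left
      constructor <;> apply Φle <;> push_cast <;>
        nlinarith [hβpos n, hβpos (n + 1), hub, hlb]
    · have hs1 : ((-1 : ℝ)) ^ n = -1 := hpar.neg_one_pow
      have hs2 : ((-1 : ℝ)) ^ (n + 1) = 1 := (Odd.add_one hpar).neg_one_pow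
      have hv1 := hθ n; rw [hs1] at hv1
      have hv2 := hθ (n + 1); rw [hs2, one_mul] at hv2
      apply Set.mem_uIcc.2; right
      constructor <;> apply Φle <;> push_cast <;>
        nlinarith [hβpos n, hβpos (n + 1), hub, hlb]
  have hcK1 : c1 ∈ Set.uIcc (A (n + 1)) (A n) :=
    Set.uIcc_subset_uIcc hmemi hmemA hc1
  have hcK2 : c2 ∈ Set.uIcc (A (n + 1)) (A n) :=
    Set.uIcc_subset_uIcc hmemi Set.right_mem_uIcc hc2
  -- pointwise bound along the orbit
  have hdt : ∀ t : ℕ, |L^[t] c1 - L^[t] c2| ≤ len n (i + t) + len (n + 1) (i + t) := by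
    intro t
    have hmap : ∀ x ∈ Set.uIcc (A (n + 1)) (A n),
        L^[t] x ∈ Set.uIcc (L^[t] (A (n + 1))) (L^[t] (A n)) := by
      intro x hx
      rcases Set.mem_uIcc.1 hx with ⟨h1, h2⟩ | ⟨h1, h2⟩
      · exact Set.mem_uIcc.2 (Or.inl ⟨(hiter_mono t).monotone h1, (hiter_mono t).monotone h2⟩)
      · exact Set.mem_uIcc.2 (Or.inr ⟨(hiter_mono t).monotone h1, (hiter_mono t).monotone h2⟩)
    have h1 := hmap c1 hcK1
    have h2 := hmap c2 hcK2
    have h3 : |L^[t] c1 - L^[t] c2| ≤ |L^[t] (A n) - L^[t] (A (n + 1))| :=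
      huIccdist _ _ _ _ h1 h2
    have h4 : |L^[t] (A n) - L^[t] (A (n + 1))|
        ≤ |L^[t] (A n) - L^[t] (Φ i 0)| + |L^[t] (Φ i 0) - L^[t] (A (n + 1))| :=
      abs_sub_le _ _ _
    have h5 : |L^[t] (A n) - L^[t] (Φ i 0)| = len n (i + t) := hlent t n
    have h6 : |L^[t] (Φ i 0) - L^[t] (A (n + 1))| = len (n + 1) (i + t) := by
      rw [abs_sub_comm]; exact hlent t (n + 1)
    linarith
  -- sum bounds
  have hS1 : ∑ t ∈ Finset.range s, len n (i + t) ≤ 2 := hsum n i s hslt.le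
  have hS2 : ∑ t ∈ Finset.range s, len (n + 1) (i + t) ≤ 2 :=
    hsum (n + 1) i s (hslt.le.trans (hq_step (n + 1)))
  -- logarithmic estimate
  have hP1log : Real.log P1 = ∑ t ∈ Finset.range s, Real.log (dL (L^[t] c1)) := by
    rw [hP1def]; exact Real.log_prod (fun t _ => (hdpos _).ne')
  have hP2log : Real.log P2 = ∑ t ∈ Finset.range s, Real.log (dL (L^[t] c2)) := by
    rw [hP2def]; exact Real.log_prod (fun t _ => (hdpos _).ne')
  have hlogd : |Real.log P1 - Real.log P2| ≤ V * 4 := by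
    rw [hP1log, hP2log, ← Finset.sum_sub_distrib]
    calc |∑ t ∈ Finset.range s, (Real.log (dL (L^[t] c1)) - Real.log (dL (L^[t] c2)))|
        ≤ ∑ t ∈ Finset.range s, |Real.log (dL (L^[t] c1)) - Real.log (dL (L^[t] c2))| :=
          Finset.abs_sum_le_sum_abs _ _
      _ ≤ ∑ t ∈ Finset.range s, V * (len n (i + t) + len (n + 1) (i + t)) := by
          apply Finset.sum_le_sum
          intro t _
          calc |Real.log (dL (L^[t] c1)) - Real.log (dL (L^[t] c2))|
              ≤ V * |L^[t] c1 - L^[t] c2| := hVlip _ _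
            _ ≤ V * (len n (i + t) + len (n + 1) (i + t)) :=
                mul_le_mul_of_nonneg_left (hdt t) hV0
      _ = V * ∑ t ∈ Finset.range s, (len n (i + t) + len (n + 1) (i + t)) := by
          rw [Finset.mul_sum]
      _ ≤ V * 4 := by
          apply mul_le_mul_of_nonneg_left _ hV0
          rw [Finset.sum_add_distrib]
          linarith
  have hRpos : 0 < P1 / P2 := div_pos hP1 hP2
  have hlogratio : |Real.log (P1 / P2)| ≤ V * 4 := by
    rw [Real.log_div hP1.ne' hP2.ne']; exact hlogd
  have habs := abs_le.1 hlogratio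
  constructor
  · rw [hratio, show (Real.exp (4 * V))⁻¹ = Real.exp (-(4 * V)) from (Real.exp_neg _).symm,
      ← Real.exp_log hRpos]
    apply Real.exp_le_exp.2
    linarith [habs.1]
  · rw [hratio, ← Real.exp_log hRpos]
    apply Real.exp_le_exp.2
    linarith [habs.2]
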